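/- Let p > 1, λ > 0, ρ = λ^{1/p}, and let q be continuous on [0,1]. If y is a nontrivial solution of -((y')^{(p-1)})' = (p-1)(λ - q(x)) y^{(p-1)} with y(0)=0, written in Prüfer form y = R S_p(φ), y' = ρ R S_p'(φ), R > 0, φ(0)=0, then R'(x)/R(x) = (q(x)/ρ^{p-1}) S_p(φ(x))^{p-1} S_p'(φ(x)), where S_p(φ)^{p-1} denotes |S_p(φ)|^{p-2} S_p(φ). -/

import Mathlib

open Real

private lemma absRpowDerivAux {p : ℝ} (hp : 1 < p) {f : ℝ → ℝ} {f' x : ℝ}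
    (hf : HasDerivAt f f' x) :
    HasDerivAt (fun t => |f t| ^ p) (p * |f x| ^ (p - 2) * f x * f') x := by
  exact ((hasDerivAt_abs_rpow (f x) hp).comp x hf).congr_deriv (by ring)

private lemma dualFunEq {p : ℝ} (hp : 1 < p) (s : ℝ) :
    |(|s| ^ (p - 2) * s)| ^ (p / (p - 1)) = |s| ^ p := by
  have hp1 : (0:ℝ) < p - 1 := by linarith
  rcases eq_or_ne s 0 with rfl | hs
  · have h1 : p / (p - 1) ≠ 0 := by positivity
    have h2 : p ≠ 0 := by positivity
    simp [Real.zero_rpow h1, Real.zero_rpow h2]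
  · have habs : |(|s| ^ (p - 2) * s)| = |s| ^ (p - 1) := by
      rw [abs_mul, abs_of_nonneg (Real.rpow_nonneg (abs_nonneg s) _),
        show p - 1 = (p - 2) + 1 by ring, Real.rpow_add_one (abs_ne_zero.2 hs)]
    rw [habs, ← Real.rpow_mul (abs_nonneg s)]
    congr 1
    field_simp

private lemma dualValEq {p : ℝ} (hp : 1 < p) (s : ℝ) :
    |(|s| ^ (p - 2) * s)| ^ (p / (p - 1) - 2) * (|s| ^ (p - 2) * s) = s := by
  have hp1 : (0:ℝ) < p - 1 := by linarith
  rcases eq_or_ne s 0 with rfl | hs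
  · simp
  · have hs0 : (0:ℝ) < |s| := abs_pos.2 hs
    have habs : |(|s| ^ (p - 2) * s)| = |s| ^ (p - 1) := by
      rw [abs_mul, abs_of_nonneg (Real.rpow_nonneg (abs_nonneg s) _),
        show p - 1 = (p - 2) + 1 by ring, Real.rpow_add_one (abs_ne_zero.2 hs)]
    rw [habs, ← Real.rpow_mul (abs_nonneg s),
      show (p - 1) * (p / (p - 1) - 2) = 2 - p by field_simp; ring,
      ← mul_assoc, ← Real.rpow_add hs0, show 2 - p + (p - 2) = 0 by ring,
      Real.rpow_zero, one_mul]

private lemma dualDerivAux {p : ℝ} (hp : 1 < p) {v : ℝ → ℝ} {w' x : ℝ}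
    (hw : HasDerivAt (fun t => |v t| ^ (p - 2) * v t) w' x) :
    HasDerivAt (fun t => |v t| ^ p) (p / (p - 1) * v x * w') x := by
  have hp1 : (0:ℝ) < p - 1 := by linarith
  have hp' : 1 < p / (p - 1) := by
    rw [lt_div_iff₀ hp1]; linarith
  have h := absRpowDerivAux hp' hw
  have hfun : (fun t => |(|v t| ^ (p - 2) * v t)| ^ (p / (p - 1))) = fun t => |v t| ^ p := by
    funext t; exact dualFunEq hp (v t)
  rw [hfun] at h
  convert h using 1
  linear_combination (-(p / (p - 1) * w')) * dualValEq hp (v x)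

private lemma pythAux {p : ℝ} (hp : 1 < p) {Sp Sp' : ℝ → ℝ}
    (hSpderiv : ∀ x : ℝ, HasDerivAt Sp (Sp' x) x)
    (hSpode : ∀ x : ℝ, HasDerivAt (fun t => |Sp' t| ^ (p - 2) * Sp' t)
      (-(p - 1) * (|Sp x| ^ (p - 2) * Sp x)) x)
    (hSp0 : Sp 0 = 0) (hSp1 : Sp' 0 = 1) (t : ℝ) :
    |Sp t| ^ p + |Sp' t| ^ p = 1 := by
  have hpm1 : p - 1 ≠ 0 := by intro h; linarith [sub_eq_zero.1 h]
  have hG : ∀ u : ℝ, HasDerivAt (fun s => |Sp s| ^ p + |Sp' s| ^ p) 0 u := by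
    intro u
    have h1 := absRpowDerivAux hp (hSpderiv u)
    have h2 := dualDerivAux hp (hSpode u)
    have h3 := h1.add h2
    refine h3.congr_deriv ?_
    symm
    field_simp
    ring
  have hconst := is_const_of_deriv_eq_zero (f := fun s => |Sp s| ^ p + |Sp' s| ^ p)
    (fun u => (hG u).differentiableAt) (fun u => (hG u).deriv) t 0
  rw [hconst, hSp0, hSp1]
  simp [Real.zero_rpow (show p ≠ 0 by positivity)]

/-- the Prüfer radius equation R'/R = (q/ρ^{p-1}) S_p(φ)^{(p-1)} S_p'(φ). -/
theorem prufer_radius_equation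
    (p lam ρ : ℝ) (hp : 1 < p) (hlam : 0 < lam) (hρ : ρ = lam ^ (1 / p))
    (q : ℝ → ℝ) (hq : ContinuousOn q (Set.Icc 0 1))
    (Sp Sp' : ℝ → ℝ)
    (hSpderiv : ∀ x : ℝ, HasDerivAt Sp (Sp' x) x)
    (hSpode : ∀ x : ℝ, HasDerivAt (fun t => |Sp' t| ^ (p - 2) * Sp' t)
      (-(p - 1) * (|Sp x| ^ (p - 2) * Sp x)) x)
    (hSp0 : Sp 0 = 0) (hSp1 : Sp' 0 = 1)
    (y yd R Rd φ : ℝ → ℝ)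
    (hy : ∀ x ∈ Set.Icc (0:ℝ) 1, HasDerivAt y (yd x) x)
    (hode : ∀ x ∈ Set.Icc (0:ℝ) 1, HasDerivAt (fun t => |yd t| ^ (p - 2) * yd t)
      (-(p - 1) * (lam - q x) * (|y x| ^ (p - 2) * y x)) x)
    (hnt : ∃ x ∈ Set.Icc (0:ℝ) 1, y x ≠ 0)
    (hy0 : y 0 = 0)
    (hRpos : ∀ x ∈ Set.Icc (0:ℝ) 1, 0 < R x)
    (hrep : ∀ x ∈ Set.Icc (0:ℝ) 1, y x = R x * Sp (φ x) ∧ yd x = ρ * R x * Sp' (φ x))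
    (hφ0 : φ 0 = 0)
    (hRd : ∀ x ∈ Set.Icc (0:ℝ) 1, HasDerivAt R (Rd x) x) :
    ∀ x ∈ Set.Icc (0:ℝ) 1,
      Rd x / R x = q x / ρ ^ (p - 1) * (|Sp (φ x)| ^ (p - 2) * Sp (φ x)) * Sp' (φ x) := by
  intro x hx
  have hp0 : (0:ℝ) < p := by linarith
  have hpne : p ≠ 0 := ne_of_gt hp0
  have hp1 : (0:ℝ) < p - 1 := by linarith
  have hpm1 : p - 1 ≠ 0 := ne_of_gt hp1
  have hρpos : 0 < ρ := hρ ▸ Real.rpow_pos_of_pos hlam _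
  have hρp : ρ ^ p = lam := by
    rw [hρ, ← Real.rpow_mul hlam.le, one_div_mul_cancel hpne, Real.rpow_one]
  have hr : 0 < R x := hRpos x hx
  obtain ⟨hyx, hydx⟩ := hrep x hx
  -- the two functions
  have hMd : HasDerivAt (fun t => lam * |R t| ^ p) (lam * p * R x ^ (p - 1) * Rd x) x := by
    have h := (absRpowDerivAux hp (hRd x hx)).const_mul lam
    refine h.congr_deriv ?_
    rw [abs_of_pos hr, show p - 1 = (p - 2) + 1 by ring, Real.rpow_add_one hr.ne']
    ring
  have hNd : HasDerivAt (fun t => |yd t| ^ p + lam * |y t| ^ p)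
      (p * q x * (|y x| ^ (p - 2) * y x) * yd x) x := by
    have h := (dualDerivAux hp (hode x hx)).add ((absRpowDerivAux hp (hy x hx)).const_mul lam)
    refine h.congr_deriv ?_
    symm
    field_simp
    ring
  -- the two functions coincide on Icc 0 1
  have hMN : ∀ t ∈ Set.Icc (0:ℝ) 1,
      (fun t => |yd t| ^ p + lam * |y t| ^ p) t = (fun t => lam * |R t| ^ p) t := by
    intro t ht
    obtain ⟨h1, h2⟩ := hrep t ht
    have hRt := hRpos t ht
    have hpy := pythAux hp hSpderiv hSpode hSp0 hSp1 (φ t)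
    have e1 : |y t| ^ p = R t ^ p * |Sp (φ t)| ^ p := by
      rw [h1, abs_mul, abs_of_pos hRt, Real.mul_rpow hRt.le (abs_nonneg _)]
    have e2 : |yd t| ^ p = lam * (R t ^ p * |Sp' (φ t)| ^ p) := by
      rw [h2, abs_mul, abs_mul, abs_of_pos hρpos, abs_of_pos hRt, mul_assoc,
        Real.mul_rpow hρpos.le (mul_nonneg hRt.le (abs_nonneg _)),
        Real.mul_rpow hRt.le (abs_nonneg _), hρp]
    simp only [e1, e2, abs_of_pos hRt]
    linear_combination (lam * R t ^ p) * hpy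
  -- equality of the derivatives within Icc
  have hu : UniqueDiffWithinAt ℝ (Set.Icc (0:ℝ) 1) x := (uniqueDiffOn_Icc (by norm_num : (0:ℝ) < 1)) x hx
  have heq : p * q x * (|y x| ^ (p - 2) * y x) * yd x = lam * p * R x ^ (p - 1) * Rd x := by
    have hNw := hNd.hasDerivWithinAt (s := Set.Icc (0:ℝ) 1)
    have hMw := (hMd.hasDerivWithinAt (s := Set.Icc (0:ℝ) 1)).congr hMN (hMN x hx)
    rw [← hNw.derivWithin hu, ← hMw.derivWithin hu]
  -- substitute the Prüfer representation
  have hA : |y x| ^ (p - 2) * y x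
      = R x ^ (p - 1) * (|Sp (φ x)| ^ (p - 2) * Sp (φ x)) := by
    rw [hyx, abs_mul, abs_of_pos hr, Real.mul_rpow hr.le (abs_nonneg _),
      show p - 1 = (p - 2) + 1 by ring, Real.rpow_add_one hr.ne']
    ring
  rw [hA, hydx] at heq
  -- final algebra
  have hρ1 : (0:ℝ) < ρ ^ (p - 1) := Real.rpow_pos_of_pos hρpos _
  have g4 : ρ ^ (p - 1) * ρ = lam := by
    rw [← Real.rpow_add_one hρpos.ne', show p - 1 + 1 = p by ring, hρp]
  rw [div_eq_iff hr.ne', div_mul_eq_mul_div, div_mul_eq_mul_div, div_mul_eq_mul_div,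
    eq_div_iff hρ1.ne']
  apply mul_left_cancel₀ (show lam * p * R x ^ (p - 1) ≠ 0 by positivity)
  linear_combination (-(ρ ^ (p - 1))) * heq
    + (p * q x * R x ^ (p - 1) * (|Sp (φ x)| ^ (p - 2) * Sp (φ x)) * R x * Sp' (φ x)) * g4
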